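/- For the double-power ODE ẋ = −κ₁|x|^{γ₁} sgn(x) − κ₂|x|^{γ₂} sgn(x) with κ₁, κ₂ > 0, 0 < γ₁ < 1 < γ₂ and |x₀| ≥ 1, the settling time satisfies T(x₀) ≤ 1/(κ₁(1−γ₁)) + (1 − |x₀|^{1−γ₂})/(κ₂(γ₂−1)) and T(x₀) ≥ ln((1 + κ₂/κ₁)/(|x₀|^{1−γ₂} + κ₂/κ₁))/(κ₁(γ₂−1)) + ln(1 + κ₂/κ₁)/(κ₂(1−γ₁)). -/

import Mathlib

/-- Signed power `|y|^γ sgn(y)` appearing in the attracting laws. -/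
noncomputable def spow (y γ : ℝ) : ℝ := |y| ^ γ * Real.sign y

open Real Set

lemma spow_of_pos {y : ℝ} (hy : 0 < y) (γ : ℝ) : spow y γ = y ^ γ := by
  simp [spow, abs_of_pos hy, Real.sign_of_pos hy]

lemma spow_neg' (y γ : ℝ) : spow (-y) γ = -spow y γ := by
  simp [spow, abs_neg, Real.sign_neg, mul_neg]

lemma mono_aux {F F' : ℝ → ℝ} {a b : ℝ} (hab : a ≤ b)
    (hc : ContinuousOn F (Set.Icc a b))
    (hd : ∀ t ∈ Set.Ioo a b, HasDerivAt F (F' t) t)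
    (h0 : ∀ t ∈ Set.Ioo a b, 0 ≤ F' t) :
    F a ≤ F b := by
  have h := monotoneOn_of_deriv_nonneg (convex_Icc a b) hc ?_ ?_
  · exact h (Set.left_mem_Icc.2 hab) (Set.right_mem_Icc.2 hab) hab
  · intro t ht
    rw [interior_Icc] at ht
    exact (hd t ht).differentiableAt.differentiableWithinAt
  · intro t ht
    rw [interior_Icc] at ht
    rw [(hd t ht).deriv]
    exact h0 t ht

set_option maxHeartbeats 2000000 in
lemma main_pos (κ₁ κ₂ γ₁ γ₂ : ℝ)
    (hκ₁ : 0 < κ₁) (hκ₂ : 0 < κ₂)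
    (hγ₁0 : 0 < γ₁) (hγ₁1 : γ₁ < 1) (hγ₂ : 1 < γ₂)
    (x : ℝ → ℝ) (x₀ : ℝ) (hx0 : x 0 = x₀) (hx₀ : 1 ≤ x₀)
    (hode : ∀ t, 0 ≤ t →
      HasDerivAt x (-κ₁ * spow (x t) γ₁ - κ₂ * spow (x t) γ₂) t) :
    sInf {t : ℝ | 0 ≤ t ∧ x t = 0} ≤
      1 / (κ₁ * (1 - γ₁)) + (1 - x₀ ^ (1 - γ₂)) / (κ₂ * (γ₂ - 1)) ∧
    sInf {t : ℝ | 0 ≤ t ∧ x t = 0} ≥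
      Real.log ((1 + κ₂ / κ₁) / (x₀ ^ (1 - γ₂) + κ₂ / κ₁)) / (κ₁ * (γ₂ - 1)) +
      Real.log (1 + κ₂ / κ₁) / (κ₂ * (1 - γ₁)) := by
  have hx₀pos : (0:ℝ) < x₀ := lt_of_lt_of_le one_pos hx₀
  have hode' : ∀ t, 0 ≤ t → 0 < x t →
      HasDerivAt x (-(κ₁ * x t ^ γ₁ + κ₂ * x t ^ γ₂)) t := by
    intro t ht hp
    have h := hode t ht
    rw [spow_of_pos hp, spow_of_pos hp] at h
    convert h using 1; ring
  have hcont : ContinuousOn x (Ici 0) := fun t ht =>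
    ((hode t ht).continuousAt).continuousWithinAt
  -- if x b ≤ 0 for some b ≥ 0, there is a zero in [0,b]
  have hzero : ∀ b : ℝ, 0 ≤ b → x b ≤ 0 → ∃ s ∈ Icc 0 b, x s = 0 := by
    intro b hb hxb
    have hsub : Icc (0:ℝ) b ⊆ Ici 0 := Icc_subset_Ici_self
    have := intermediate_value_Icc' hb (hcont.mono hsub)
    have h0 : (0:ℝ) ∈ Icc (x b) (x 0) := ⟨hxb, by rw [hx0]; exact le_of_lt hx₀pos⟩
    obtain ⟨s, hs, hxs⟩ := this h0
    exact ⟨s, hs, hxs⟩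
  set U : ℝ := 1 / (κ₁ * (1 - γ₁)) + (1 - x₀ ^ (1 - γ₂)) / (κ₂ * (γ₂ - 1)) with hU
  set tu : ℝ := (1 - x₀ ^ (1 - γ₂)) / (κ₂ * (γ₂ - 1)) with htu
  have hx0p1 : x₀ ^ (1 - γ₂) ≤ 1 :=
    Real.rpow_le_one_of_one_le_of_nonpos hx₀ (by linarith)
  have hx0pp : 0 < x₀ ^ (1 - γ₂) := Real.rpow_pos_of_pos hx₀pos _
  have ht₁0 : 0 ≤ tu := div_nonneg (by linarith) (le_of_lt (mul_pos hκ₂ (by linarith)))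
  have hinv : 0 < 1 / (κ₁ * (1 - γ₁)) := one_div_pos.2 (mul_pos hκ₁ (by linarith))
  have ht₁U : tu ≤ U := by rw [hU]; linarith
  have hU0 : 0 ≤ U := le_trans ht₁0 ht₁U
  -- existence of a zero in [0, U]
  have hex : ∃ s ∈ Icc (0:ℝ) U, x s = 0 := by
    by_contra hno
    push_neg at hno
    have hpos : ∀ s ∈ Icc (0:ℝ) U, 0 < x s := by
      intro s hs
      rcases lt_or_ge 0 (x s) with h | h
      · exact h
      · obtain ⟨r, hr, hxr⟩ := hzero s hs.1 h
        exact absurd hxr (hno r ⟨hr.1, le_trans hr.2 hs.2⟩)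
    -- Phase 1: until tu, x tu has dropped below 1
    have hsub1 : Icc (0:ℝ) tu ⊆ Icc 0 U := Icc_subset_Icc_right ht₁U
    have hW : (fun s => x s ^ (1-γ₂) - κ₂*(γ₂-1)*s) 0 ≤
        (fun s => x s ^ (1-γ₂) - κ₂*(γ₂-1)*s) tu := by
      refine mono_aux (F := fun s => x s ^ (1-γ₂) - κ₂*(γ₂-1)*s) (F' := fun s =>
        -(κ₁ * x s ^ γ₁ + κ₂ * x s ^ γ₂) * (1-γ₂) * x s ^ (1-γ₂-1) - κ₂*(γ₂-1)) ht₁0 ?_ ?_ ?_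
      · exact ((hcont.mono (hsub1.trans (Icc_subset_Ici_self))).rpow_const
          (fun s hs => Or.inl (hpos s (hsub1 hs)).ne')).sub
          ((continuous_const.mul continuous_id).continuousOn)
      · intro s hs
        have hp := hpos s (hsub1 ⟨hs.1.le, hs.2.le⟩)
        have hlin : HasDerivAt (fun u : ℝ => κ₂*(γ₂-1)*u) (κ₂*(γ₂-1)) s := by
          simpa using (hasDerivAt_id s).const_mul (κ₂*(γ₂-1))
        exact ((hode' s hs.1.le hp).rpow_const (Or.inl hp.ne')).sub hlin
      · intro s hs
        have hp := hpos s (hsub1 ⟨hs.1.le, hs.2.le⟩)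
        set a := x s
        have e1 : a ^ γ₁ * a ^ (1-γ₂-1) = a ^ (γ₁-γ₂) := by
          rw [← Real.rpow_add hp]; congr 1; ring
        have e2 : a ^ γ₂ * a ^ (1-γ₂-1) = 1 := by
          rw [← Real.rpow_add hp, show γ₂+(1-γ₂-1) = (0:ℝ) by ring, Real.rpow_zero]
        have e3 : (0:ℝ) < a ^ (γ₁-γ₂) := Real.rpow_pos_of_pos hp _
        have expand : -(κ₁ * a ^ γ₁ + κ₂ * a ^ γ₂) * (1-γ₂) * a ^ (1-γ₂-1) - κ₂*(γ₂-1)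
            = (γ₂-1) * κ₁ * (a^γ₁ * a^(1-γ₂-1)) + κ₂*(γ₂-1) * (a^γ₂*a^(1-γ₂-1)) - κ₂*(γ₂-1) := by
          ring
        show 0 ≤ -(κ₁ * a ^ γ₁ + κ₂ * a ^ γ₂) * (1-γ₂) * a ^ (1-γ₂-1) - κ₂*(γ₂-1)
        rw [expand, e1, e2]
        nlinarith [mul_pos (mul_pos (show (0:ℝ)<γ₂-1 by linarith) hκ₁) e3]
    simp only [hx0] at hW
    have htu1 : x tu ≤ 1 := by
      have hne3 : κ₂*(γ₂-1) ≠ 0 := (mul_pos hκ₂ (by linarith)).ne'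
      have hmul : κ₂*(γ₂-1)*tu = 1 - x₀ ^ (1-γ₂) := by
        rw [htu, mul_comm, div_mul_cancel₀ _ hne3]
      by_contra hgt
      push_neg at hgt
      have := Real.rpow_lt_one_of_one_lt_of_neg hgt (show 1-γ₂ < 0 by linarith)
      nlinarith
    -- Phase 2: from tu to U, x reaches 0, contradiction
    have hZ : (fun s => -(x s ^ (1-γ₁) + κ₁*(1-γ₁)*s)) tu ≤
        (fun s => -(x s ^ (1-γ₁) + κ₁*(1-γ₁)*s)) U := by
      refine mono_aux (F := fun s => -(x s ^ (1-γ₁) + κ₁*(1-γ₁)*s)) (F' := fun s =>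
        -((-(κ₁ * x s ^ γ₁ + κ₂ * x s ^ γ₂)) * (1-γ₁) * x s ^ (1-γ₁-1) + κ₁*(1-γ₁))) ht₁U ?_ ?_ ?_
      · have hsub2 : Icc tu U ⊆ Icc 0 U := Icc_subset_Icc_left ht₁0
        exact (((hcont.mono (hsub2.trans (Icc_subset_Ici_self))).rpow_const
          (fun s hs => Or.inl (hpos s (hsub2 hs)).ne')).add
          ((continuous_const.mul continuous_id).continuousOn)).neg
      · intro s hs
        have hs0 : (0:ℝ) ≤ s := le_trans ht₁0 hs.1.le
        have hp := hpos s ⟨hs0, hs.2.le⟩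
        have hlin : HasDerivAt (fun u : ℝ => κ₁*(1-γ₁)*u) (κ₁*(1-γ₁)) s := by
          simpa using (hasDerivAt_id s).const_mul (κ₁*(1-γ₁))
        exact (((hode' s hs0 hp).rpow_const (Or.inl hp.ne')).add hlin).neg
      · intro s hs
        have hs0 : (0:ℝ) ≤ s := le_trans ht₁0 hs.1.le
        have hp := hpos s ⟨hs0, hs.2.le⟩
        set a := x s
        have e1 : a ^ γ₁ * a ^ (1-γ₁-1) = 1 := by
          rw [← Real.rpow_add hp, show γ₁+(1-γ₁-1) = (0:ℝ) by ring, Real.rpow_zero]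
        have e2 : a ^ γ₂ * a ^ (1-γ₁-1) = a ^ (γ₂-γ₁) := by
          rw [← Real.rpow_add hp]; congr 1; ring
        have e3 : (0:ℝ) < a ^ (γ₂-γ₁) := Real.rpow_pos_of_pos hp _
        have expand : -((-(κ₁ * a ^ γ₁ + κ₂ * a ^ γ₂)) * (1-γ₁) * a ^ (1-γ₁-1) + κ₁*(1-γ₁))
            = (1-γ₁) * κ₁ * (a^γ₁ * a^(1-γ₁-1)) + κ₂*(1-γ₁) * (a^γ₂*a^(1-γ₁-1)) - κ₁*(1-γ₁) := by
          ring
        show 0 ≤ -((-(κ₁ * a ^ γ₁ + κ₂ * a ^ γ₂)) * (1-γ₁) * a ^ (1-γ₁-1) + κ₁*(1-γ₁))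
        rw [expand, e1, e2]
        nlinarith [mul_pos (mul_pos (show (0:ℝ)<1-γ₁ by linarith) hκ₂) e3]
    simp only at hZ
    have hxtup : 0 < x tu := hpos tu ⟨ht₁0, ht₁U⟩
    have htu1' : x tu ^ (1-γ₁) ≤ 1 :=
      Real.rpow_le_one hxtup.le htu1 (by linarith)
    have hne2 : κ₁*(1-γ₁) ≠ 0 := (mul_pos hκ₁ (by linarith)).ne'
    have hUtu : κ₁*(1-γ₁)*(U - tu) = 1 := by
      have h1 : U - tu = 1 / (κ₁ * (1 - γ₁)) := by rw [hU]; ring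
      rw [h1, mul_one_div, div_self hne2]
    have hxU : 0 < x U ^ (1-γ₁) :=
      Real.rpow_pos_of_pos (hpos U ⟨hU0, le_rfl⟩) _
    nlinarith
  obtain ⟨T', hT'mem, hxT'⟩ := hex
  set S : Set ℝ := {t : ℝ | 0 ≤ t ∧ x t = 0} with hS
  have hSne : S.Nonempty := ⟨T', hT'mem.1, hxT'⟩
  have hSbdd : BddBelow S := ⟨0, fun t ht => ht.1⟩
  have hupper : sInf S ≤ U := le_trans (csInf_le hSbdd ⟨hT'mem.1, hxT'⟩) hT'mem.2
  refine ⟨hupper, ?_⟩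
  -- lower bound
  set T : ℝ := sInf S with hT
  have hT0 : 0 ≤ T := le_csInf hSne fun t ht => ht.1
  have hxT : x T = 0 := by
    have hclos : T ∈ closure S := csInf_mem_closure hSne hSbdd
    have hcw : ContinuousWithinAt x S T :=
      ((hode T hT0).continuousAt).continuousWithinAt
    have hmem := hcw.mem_closure_image hclos
    have himg : x '' S ⊆ {0} := by rintro _ ⟨t, ht, rfl⟩; exact ht.2
    have := closure_mono himg hmem
    rwa [closure_singleton, mem_singleton_iff] at this
  have hTne : ∀ s, 0 ≤ s → s < T → x s ≠ 0 := by
    intro s h1 h2 h3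
    exact absurd (csInf_le hSbdd ⟨h1, h3⟩) (not_le.2 h2)
  have hposT : ∀ s ∈ Ico (0:ℝ) T, 0 < x s := by
    intro s hs
    rcases lt_or_ge 0 (x s) with h | h
    · exact h
    · obtain ⟨r, hr, hxr⟩ := hzero s hs.1 h
      exact absurd hxr (hTne r hr.1 (lt_of_le_of_lt hr.2 hs.2))
  have hanti : AntitoneOn x (Icc 0 T) := by
    apply antitoneOn_of_deriv_nonpos (convex_Icc 0 T)
      (hcont.mono Icc_subset_Ici_self)
    · intro s hs
      rw [interior_Icc] at hs
      exact (hode' s (le_of_lt hs.1) (hposT s ⟨le_of_lt hs.1, hs.2⟩)).differentiableAt.differentiableWithinAt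
    · intro s hs
      rw [interior_Icc] at hs
      have hp := hposT s ⟨le_of_lt hs.1, hs.2⟩
      rw [(hode' s (le_of_lt hs.1) hp).deriv]
      have : 0 < κ₁ * x s ^ γ₁ + κ₂ * x s ^ γ₂ := by positivity
      linarith
  -- the time t₁ at which x = 1
  obtain ⟨t₁, ht₁mem, hxt₁⟩ : ∃ t₁ ∈ Icc (0:ℝ) T, x t₁ = 1 := by
    have := intermediate_value_Icc' hT0 (hcont.mono Icc_subset_Ici_self)
    have h1 : (1:ℝ) ∈ Icc (x T) (x 0) := by rw [hxT, hx0]; exact ⟨zero_le_one, hx₀⟩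
    obtain ⟨s, hs, hxs⟩ := this h1
    exact ⟨s, hs, hxs⟩
  have hge1 : ∀ s ∈ Icc 0 t₁, 1 ≤ x s := by
    intro s hs
    rw [← hxt₁]
    exact hanti ⟨hs.1, le_trans hs.2 ht₁mem.2⟩ ht₁mem hs.2
  have hle1 : ∀ s ∈ Icc t₁ T, x s ≤ 1 := by
    intro s hs
    rw [← hxt₁]
    exact hanti ht₁mem ⟨le_trans ht₁mem.1 hs.1, hs.2⟩ hs.1
  have hT1 : t₁ ≤ T := ht₁mem.2
  -- Phase A: log-comparison on [0, t₁]
  have hGA : (fun s => Real.log (κ₁ * x s ^ (1-γ₂) + κ₂) / (κ₁*(1-γ₂)) + s) 0 ≤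
      (fun s => Real.log (κ₁ * x s ^ (1-γ₂) + κ₂) / (κ₁*(1-γ₂)) + s) t₁ := by
    refine mono_aux (F := fun s => Real.log (κ₁ * x s ^ (1-γ₂) + κ₂) / (κ₁*(1-γ₂)) + s)
      (F' := fun s => κ₁ * ((-(κ₁ * x s ^ γ₁ + κ₂ * x s ^ γ₂)) * (1-γ₂) * x s ^ (1-γ₂-1)) /
        (κ₁ * x s ^ (1-γ₂) + κ₂) / (κ₁*(1-γ₂)) + 1) ht₁mem.1 ?_ ?_ ?_
    · have hposA : ∀ s ∈ Icc (0:ℝ) t₁, 0 < x s := fun s hs =>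
        lt_of_lt_of_le one_pos (hge1 s hs)
      have c1 : ContinuousOn (fun s => x s ^ (1-γ₂)) (Icc 0 t₁) :=
        (hcont.mono Icc_subset_Ici_self).rpow_const (fun s hs => Or.inl (hposA s hs).ne')
      have c2 : ContinuousOn (fun s => Real.log (κ₁ * x s ^ (1-γ₂) + κ₂)) (Icc 0 t₁) := by
        apply ContinuousOn.log ((continuousOn_const.mul c1).add continuousOn_const)
        intro s hs
        have := Real.rpow_pos_of_pos (hposA s hs) (1-γ₂)
        show κ₁ * x s ^ (1-γ₂) + κ₂ ≠ 0
        nlinarith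
      exact (c2.div_const _).add continuousOn_id
    · intro s hs
      have hmem : s ∈ Icc (0:ℝ) t₁ := ⟨hs.1.le, hs.2.le⟩
      have hp : 0 < x s := lt_of_lt_of_le one_pos (hge1 s hmem)
      have hD : 0 < κ₁ * x s ^ (1-γ₂) + κ₂ := by
        have := Real.rpow_pos_of_pos hp (1-γ₂); nlinarith
      have h1 := (hode' s hs.1.le hp).rpow_const (p := 1-γ₂) (Or.inl hp.ne')
      have h2 := (h1.const_mul κ₁).add_const κ₂
      exact ((h2.log hD.ne').div_const (κ₁*(1-γ₂))).add (hasDerivAt_id s)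
    · intro s hs
      have hmem : s ∈ Icc (0:ℝ) t₁ := ⟨hs.1.le, hs.2.le⟩
      have ha1 : 1 ≤ x s := hge1 s hmem
      set a := x s
      have hp : 0 < a := lt_of_lt_of_le one_pos ha1
      have hD : 0 < κ₁ * a ^ (1-γ₂) + κ₂ := by
        have := Real.rpow_pos_of_pos hp (1-γ₂); nlinarith
      have hc : κ₁ * (1-γ₂) ≠ 0 := by
        intro h; rcases mul_eq_zero.1 h with h|h
        · exact hκ₁.ne' h
        · linarith
      show 0 ≤ κ₁ * ((-(κ₁ * a ^ γ₁ + κ₂ * a ^ γ₂)) * (1-γ₂) * a ^ (1-γ₂-1)) /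
          (κ₁ * a ^ (1-γ₂) + κ₂) / (κ₁*(1-γ₂)) + 1
      have key : κ₁ * ((-(κ₁ * a ^ γ₁ + κ₂ * a ^ γ₂)) * (1-γ₂) * a ^ (1-γ₂-1)) /
            (κ₁ * a ^ (1-γ₂) + κ₂) / (κ₁*(1-γ₂))
          = (-(κ₁ * a ^ γ₁ + κ₂ * a ^ γ₂)) * a ^ (1-γ₂-1) / (κ₁ * a ^ (1-γ₂) + κ₂) := by
        have h1g2 : (1:ℝ)-γ₂ ≠ 0 := by intro h; linarith
        field_simp
      rw [key]
      have e1 : a ^ γ₁ * a ^ (1-γ₂-1) = a ^ (γ₁-γ₂) := by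
        rw [← Real.rpow_add hp]; congr 1; ring
      have e2 : a ^ γ₂ * a ^ (1-γ₂-1) = 1 := by
        rw [← Real.rpow_add hp, show γ₂+(1-γ₂-1) = (0:ℝ) by ring, Real.rpow_zero]
      have hcmp : a ^ (γ₁-γ₂) ≤ a ^ (1-γ₂) :=
        Real.rpow_le_rpow_of_exponent_le ha1 (by linarith)
      have hnum : -(κ₁ * a ^ (1-γ₂) + κ₂) ≤ (-(κ₁ * a ^ γ₁ + κ₂ * a ^ γ₂)) * a ^ (1-γ₂-1) := by
        have expand : (-(κ₁ * a ^ γ₁ + κ₂ * a ^ γ₂)) * a ^ (1-γ₂-1)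
            = -(κ₁ * (a^γ₁ * a^(1-γ₂-1)) + κ₂ * (a^γ₂ * a^(1-γ₂-1))) := by ring
        rw [expand, e1, e2]
        nlinarith [mul_le_mul_of_nonneg_left hcmp hκ₁.le]
      have hfin : (-1:ℝ) ≤ (-(κ₁ * a ^ γ₁ + κ₂ * a ^ γ₂)) * a ^ (1-γ₂-1) /
          (κ₁ * a ^ (1-γ₂) + κ₂) := by
        rw [le_div_iff₀ hD]; linarith
      linarith
  simp only [hx0, hxt₁, Real.one_rpow, mul_one, add_zero] at hGA
  -- Phase B: log-comparison on [t₁, T]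
  have hGB : (fun s => Real.log (κ₁ + κ₂ * x s ^ (1-γ₁)) / (κ₂*(1-γ₁)) + s) t₁ ≤
      (fun s => Real.log (κ₁ + κ₂ * x s ^ (1-γ₁)) / (κ₂*(1-γ₁)) + s) T := by
    refine mono_aux (F := fun s => Real.log (κ₁ + κ₂ * x s ^ (1-γ₁)) / (κ₂*(1-γ₁)) + s)
      (F' := fun s => κ₂ * ((-(κ₁ * x s ^ γ₁ + κ₂ * x s ^ γ₂)) * (1-γ₁) * x s ^ (1-γ₁-1)) /
        (κ₁ + κ₂ * x s ^ (1-γ₁)) / (κ₂*(1-γ₁)) + 1) hT1 ?_ ?_ ?_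
    · have hnn : ∀ s ∈ Icc t₁ T, 0 ≤ x s := by
        intro s hs
        rcases eq_or_lt_of_le hs.2 with h | h
        · rw [h, hxT]
        · exact (hposT s ⟨le_trans ht₁mem.1 hs.1, h⟩).le
      have hsubB : Icc t₁ T ⊆ Ici 0 := fun s hs => le_trans ht₁mem.1 hs.1
      have c1 : ContinuousOn (fun s => x s ^ (1-γ₁)) (Icc t₁ T) :=
        (hcont.mono hsubB).rpow_const (fun s _ => Or.inr (by linarith))
      have c2 : ContinuousOn (fun s => Real.log (κ₁ + κ₂ * x s ^ (1-γ₁))) (Icc t₁ T) := by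
        apply ContinuousOn.log (continuousOn_const.add (continuousOn_const.mul c1))
        intro s hs
        have := Real.rpow_nonneg (hnn s hs) (1-γ₁)
        show κ₁ + κ₂ * x s ^ (1-γ₁) ≠ 0
        nlinarith
      exact (c2.div_const _).add continuousOn_id
    · intro s hs
      have hs0 : (0:ℝ) ≤ s := le_trans ht₁mem.1 hs.1.le
      have hp : 0 < x s := hposT s ⟨hs0, hs.2⟩
      have hD : 0 < κ₁ + κ₂ * x s ^ (1-γ₁) := by
        have := Real.rpow_pos_of_pos hp (1-γ₁); nlinarith
      have h1 := (hode' s hs0 hp).rpow_const (p := 1-γ₁) (Or.inl hp.ne')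
      have h2 := (h1.const_mul κ₂).const_add κ₁
      exact ((h2.log hD.ne').div_const (κ₂*(1-γ₁))).add (hasDerivAt_id s)
    · intro s hs
      have hs0 : (0:ℝ) ≤ s := le_trans ht₁mem.1 hs.1.le
      have hpp : 0 < x s := hposT s ⟨hs0, hs.2⟩
      have hle : x s ≤ 1 := hle1 s ⟨hs.1.le, hs.2.le⟩
      set a := x s
      have hD : 0 < κ₁ + κ₂ * a ^ (1-γ₁) := by
        have := Real.rpow_pos_of_pos hpp (1-γ₁); nlinarith
      show 0 ≤ κ₂ * ((-(κ₁ * a ^ γ₁ + κ₂ * a ^ γ₂)) * (1-γ₁) * a ^ (1-γ₁-1)) /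
          (κ₁ + κ₂ * a ^ (1-γ₁)) / (κ₂*(1-γ₁)) + 1
      have h1g : (1:ℝ)-γ₁ ≠ 0 := by
        intro h; linarith
      have key : κ₂ * ((-(κ₁ * a ^ γ₁ + κ₂ * a ^ γ₂)) * (1-γ₁) * a ^ (1-γ₁-1)) /
            (κ₁ + κ₂ * a ^ (1-γ₁)) / (κ₂*(1-γ₁))
          = (-(κ₁ * a ^ γ₁ + κ₂ * a ^ γ₂)) * a ^ (1-γ₁-1) / (κ₁ + κ₂ * a ^ (1-γ₁)) := by
        field_simp
      rw [key]
      have e1 : a ^ γ₁ * a ^ (1-γ₁-1) = 1 := by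
        rw [← Real.rpow_add hpp, show γ₁+(1-γ₁-1) = (0:ℝ) by ring, Real.rpow_zero]
      have e2 : a ^ γ₂ * a ^ (1-γ₁-1) = a ^ (γ₂-γ₁) := by
        rw [← Real.rpow_add hpp]; congr 1; ring
      have hcmp : a ^ (γ₂-γ₁) ≤ a ^ (1-γ₁) :=
        Real.rpow_le_rpow_of_exponent_ge hpp hle (by linarith)
      have hnum : -(κ₁ + κ₂ * a ^ (1-γ₁)) ≤ (-(κ₁ * a ^ γ₁ + κ₂ * a ^ γ₂)) * a ^ (1-γ₁-1) := by
        have expand : (-(κ₁ * a ^ γ₁ + κ₂ * a ^ γ₂)) * a ^ (1-γ₁-1)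
            = -(κ₁ * (a^γ₁ * a^(1-γ₁-1)) + κ₂ * (a^γ₂ * a^(1-γ₁-1))) := by ring
        rw [expand, e1, e2]
        nlinarith [mul_le_mul_of_nonneg_left hcmp hκ₂.le]
      have hfin : (-1:ℝ) ≤ (-(κ₁ * a ^ γ₁ + κ₂ * a ^ γ₂)) * a ^ (1-γ₁-1) /
          (κ₁ + κ₂ * a ^ (1-γ₁)) := by
        rw [le_div_iff₀ hD]; linarith
      linarith
  simp only [hxt₁, hxT, Real.one_rpow, mul_one,
    Real.zero_rpow (show (1:ℝ)-γ₁ ≠ 0 by intro h; linarith), mul_zero, add_zero] at hGB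
  -- final algebra
  set p := x₀ ^ (1 - γ₂) with hp
  have hApos : (0:ℝ) < κ₁ * p + κ₂ := by nlinarith [hx0pp]
  have hBpos : (0:ℝ) < κ₁ + κ₂ := by linarith
  have hc1 : κ₁ * (γ₂-1) ≠ 0 := (mul_pos hκ₁ (by linarith)).ne'
  have hc2 : κ₁ * (1-γ₂) ≠ 0 := by
    intro h; rcases mul_eq_zero.1 h with h|h
    · exact hκ₁.ne' h
    · linarith
  have hppos : (0:ℝ) < p + κ₂ / κ₁ := by positivity
  have hL1 : Real.log ((1 + κ₂ / κ₁) / (p + κ₂ / κ₁)) / (κ₁ * (γ₂ - 1))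
      = Real.log (κ₁ * p + κ₂) / (κ₁*(1-γ₂)) - Real.log (κ₁ + κ₂) / (κ₁*(1-γ₂)) := by
    have hratio : (1 + κ₂ / κ₁) / (p + κ₂ / κ₁) = (κ₁ + κ₂) / (κ₁ * p + κ₂) := by
      rw [div_eq_div_iff hppos.ne' hApos.ne']
      field_simp
      try ring
      try exact Or.inl trivial
    rw [hratio, Real.log_div hBpos.ne' hApos.ne', ← sub_div,
      div_eq_div_iff hc1 hc2]
    ring
  have hL2 : Real.log (1 + κ₂ / κ₁) / (κ₂ * (1 - γ₁))
      = Real.log (κ₁ + κ₂) / (κ₂*(1-γ₁)) - Real.log κ₁ / (κ₂*(1-γ₁)) := by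
    have h12 : 1 + κ₂ / κ₁ = (κ₁ + κ₂)/κ₁ := by field_simp
    rw [h12, Real.log_div hBpos.ne' hκ₁.ne', sub_div]
  rw [ge_iff_le, hL1, hL2]
  linarith
theorem stmt_10 (κ₁ κ₂ γ₁ γ₂ : ℝ)
    (hκ₁ : 0 < κ₁) (hκ₂ : 0 < κ₂)
    (hγ₁0 : 0 < γ₁) (hγ₁1 : γ₁ < 1) (hγ₂ : 1 < γ₂)
    (x : ℝ → ℝ) (x₀ : ℝ) (hx0 : x 0 = x₀) (hx₀ : 1 ≤ |x₀|)
    (hode : ∀ t, 0 ≤ t →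
      HasDerivAt x (-κ₁ * spow (x t) γ₁ - κ₂ * spow (x t) γ₂) t) :
    sInf {t : ℝ | 0 ≤ t ∧ x t = 0} ≤
      1 / (κ₁ * (1 - γ₁)) + (1 - |x₀| ^ (1 - γ₂)) / (κ₂ * (γ₂ - 1)) ∧
    sInf {t : ℝ | 0 ≤ t ∧ x t = 0} ≥
      Real.log ((1 + κ₂ / κ₁) / (|x₀| ^ (1 - γ₂) + κ₂ / κ₁)) / (κ₁ * (γ₂ - 1)) +
      Real.log (1 + κ₂ / κ₁) / (κ₂ * (1 - γ₁)) := by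
  rcases abs_cases x₀ with ⟨habs, _⟩ | ⟨habs, _⟩
  · rw [habs]
    exact main_pos κ₁ κ₂ γ₁ γ₂ hκ₁ hκ₂ hγ₁0 hγ₁1 hγ₂ x x₀ hx0
      (by rwa [habs] at hx₀) hode
  · rw [habs]
    have hodeneg : ∀ t, 0 ≤ t → HasDerivAt (fun t => -x t)
        (-κ₁ * spow (-x t) γ₁ - κ₂ * spow (-x t) γ₂) t := by
      intro t ht
      have h := (hode t ht).neg
      have heq : -κ₁ * spow (-x t) γ₁ - κ₂ * spow (-x t) γ₂
          = -(-κ₁ * spow (x t) γ₁ - κ₂ * spow (x t) γ₂) := by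
        rw [spow_neg', spow_neg']; ring
      rw [heq]
      exact h
    have hres := main_pos κ₁ κ₂ γ₁ γ₂ hκ₁ hκ₂ hγ₁0 hγ₁1 hγ₂ (fun t => -x t) (-x₀)
      (by simp [hx0]) (by rwa [habs] at hx₀) hodeneg
    simp only [neg_eq_zero] at hres
    exact hres
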